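/- Let S = {(0,0),(0,1),(0,2),(1,0),(1,1),(1,2),(2,0),(2,1)} index the degree-2 approximate Euclidean order basis on the reference quadrilateral. Let M be the diagonal real S×S matrix with M_{(v,w),(v,w)} = 4/((2v+1)(2w+1)). For real parameters q0, q1, let Q be the symmetric S×S matrix whose only nonzero entries (listing one entry of each symmetric pair) are Q_{(0,1),(2,1)} = −3·q1, Q_{(0,2),(2,0)} = 9·q1, Q_{(1,0),(1,2)} = −3·q1, Q_{(1,1),(1,1)} = q1, Q_{(1,2),(1,2)} = q0, and Q_{(2,1),(2,1)} = q0. Then M + Q is positive definite if and only if 60·q0 − 405·q1² + 16 > 0 and 2025·q1² < 16. -/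

import Mathlib

/-- The index set of the degree-2 approximate Euclidean order basis:
modes `(v,w)` with `0 ≤ v,w ≤ 2` excluding `(2,2)`. -/
def AE2 : Type := {p : Fin 3 × Fin 3 // p ≠ (2, 2)}

instance : Fintype AE2 := Subtype.fintype _
instance : DecidableEq AE2 := Subtype.instDecidableEq

/-- Modal mass matrix of the degree-2 approximate Euclidean order Legendre basis:
`M_{(v,w),(v,w)} = 4/((2v+1)(2w+1))`. -/
noncomputable def massAE2 : Matrix AE2 AE2 ℝ :=
  Matrix.diagonal fun p =>
    (4 : ℝ) / (((2 * (p.val.1 : ℕ) + 1) * (2 * (p.val.2 : ℕ) + 1) : ℕ) : ℝ)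

/-- The symmetric filter matrix `Q(q0, q1)` for the degree-2 approximate Euclidean
order basis. -/
def filterAE2 (q0 q1 : ℝ) : Matrix AE2 AE2 ℝ :=
  fun i j =>
    if (i.val = (0, 1) ∧ j.val = (2, 1)) ∨ (i.val = (2, 1) ∧ j.val = (0, 1)) ∨
       (i.val = (1, 0) ∧ j.val = (1, 2)) ∨ (i.val = (1, 2) ∧ j.val = (1, 0)) then -3 * q1
    else if (i.val = (0, 2) ∧ j.val = (2, 0)) ∨ (i.val = (2, 0) ∧ j.val = (0, 2)) then 9 * q1
    else if i.val = (1, 1) ∧ j.val = (1, 1) then q1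
    else if (i.val = (1, 2) ∧ j.val = (1, 2)) ∨ (i.val = (2, 1) ∧ j.val = (2, 1)) then q0
    else 0

def e00 : AE2 := ⟨(0,0), by decide⟩
def e01 : AE2 := ⟨(0,1), by decide⟩
def e02 : AE2 := ⟨(0,2), by decide⟩
def e10 : AE2 := ⟨(1,0), by decide⟩
def e11 : AE2 := ⟨(1,1), by decide⟩
def e12 : AE2 := ⟨(1,2), by decide⟩
def e20 : AE2 := ⟨(2,0), by decide⟩
def e21 : AE2 := ⟨(2,1), by decide⟩

theorem sumAE2 (f : AE2 → ℝ) :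
    ∑ i, f i = f e00 + f e01 + f e02 + f e10 + f e11 + f e12 + f e20 + f e21 := by
  rw [show (Finset.univ : Finset AE2) = {e00,e01,e02,e10,e11,e12,e20,e21} by decide]
  rw [Finset.sum_insert (by decide), Finset.sum_insert (by decide), Finset.sum_insert (by decide),
     Finset.sum_insert (by decide), Finset.sum_insert (by decide), Finset.sum_insert (by decide),
     Finset.sum_insert (by decide), Finset.sum_singleton]
  ring

set_option maxHeartbeats 1000000 in
theorem quadAE2 (q0 q1 : ℝ) (x : AE2 → ℝ) :
    dotProduct x ((massAE2 + filterAE2 q0 q1).mulVec x) =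
      4 * (x e00)^2 + (4/3) * (x e01)^2 + (4/5) * (x e02)^2 + (4/3) * (x e10)^2
      + (4/9 + q1) * (x e11)^2 + (4/15 + q0) * (x e12)^2 + (4/5) * (x e20)^2
      + (4/15 + q0) * (x e21)^2
      - 6 * q1 * (x e01) * (x e21) - 6 * q1 * (x e10) * (x e12)
      + 18 * q1 * (x e02) * (x e20) := by
  simp only [dotProduct, Matrix.mulVec, sumAE2, Matrix.add_apply, massAE2, filterAE2,
    Matrix.diagonal_apply]
  norm_num (config := { decide := true }) [e00, e01, e02, e10, e11, e12, e20, e21]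
  ring

set_option maxHeartbeats 1000000 in
theorem filter_herm (q0 q1 : ℝ) : (filterAE2 q0 q1).IsHermitian := by
  ext i j
  simp only [Matrix.conjTranspose_apply, star_trivial]
  fin_cases i <;> fin_cases j <;> rfl

set_option maxHeartbeats 1000000 in
theorem pos_form (q0 q1 a b c d e f g h : ℝ)
    (hD : 0 < 60 * q0 - 405 * q1 ^ 2 + 16) (hE : 2025 * q1 ^ 2 < 16)
    (hne : a ≠ 0 ∨ b ≠ 0 ∨ c ≠ 0 ∨ d ≠ 0 ∨ e ≠ 0 ∨ f ≠ 0 ∨ g ≠ 0 ∨ h ≠ 0) :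
    0 < 4 * a^2 + (4/3) * b^2 + (4/5) * c^2 + (4/3) * d^2 + (4/9 + q1) * e^2
      + (4/15 + q0) * f^2 + (4/5) * g^2 + (4/15 + q0) * h^2
      - 6 * q1 * b * h - 6 * q1 * d * f + 18 * q1 * c * g := by
  have hq1 : 0 < 4/9 + q1 := by nlinarith [sq_nonneg (45 * q1 + 4)]
  have hE' : 0 < 16 - 2025 * q1 ^ 2 := by linarith
  have sqp : ∀ t : ℝ, t ≠ 0 → 0 < t ^ 2 := fun t ht =>
    lt_of_le_of_ne (sq_nonneg t) (Ne.symm (pow_ne_zero 2 ht))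
  have S1 := sq_nonneg (b - (9/4) * q1 * h)
  have S2 := sq_nonneg (d - (9/4) * q1 * f)
  have S3 := sq_nonneg (c + (45/4) * q1 * g)
  have N1 := mul_nonneg hD.le (sq_nonneg h)
  have N2 := mul_nonneg hD.le (sq_nonneg f)
  have N3 := mul_nonneg hE'.le (sq_nonneg g)
  have N4 := mul_nonneg hq1.le (sq_nonneg e)
  have A := sq_nonneg a
  rcases hne with ha | hb | hc | hd | he | hf | hg | hh
  · linarith [sqp a ha]
  · rcases eq_or_ne h 0 with h0 | h0
    · subst h0; linarith [sqp b hb]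
    · linarith [mul_pos hD (sqp h h0)]
  · rcases eq_or_ne g 0 with h0 | h0
    · subst h0; linarith [sqp c hc]
    · linarith [mul_pos hE' (sqp g h0)]
  · rcases eq_or_ne f 0 with h0 | h0
    · subst h0; linarith [sqp d hd]
    · linarith [mul_pos hD (sqp f h0)]
  · linarith [mul_pos hq1 (sqp e he)]
  · linarith [mul_pos hD (sqp f hf)]
  · linarith [mul_pos hE' (sqp g hg)]
  · linarith [mul_pos hD (sqp h hh)]

set_option maxHeartbeats 1000000 in
/-- For the degree-2 approximate Euclidean order basis, `M + Q` is positive definite iff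
`60 q0 - 405 q1² + 16 > 0` and `2025 q1² < 16`. -/
theorem stmt_5 (q0 q1 : ℝ) :
    (massAE2 + filterAE2 q0 q1).PosDef ↔
      60 * q0 - 405 * q1 ^ 2 + 16 > 0 ∧ 2025 * q1 ^ 2 < 16 := by
  constructor
  · intro hpd
    constructor
    · have hyne : (fun i => if i = e01 then 3 * q1 else if i = e21 then 4/3 else 0 : AE2 → ℝ) ≠ 0 := by
        intro hcon
        have h := congrFun hcon e21
        norm_num (config := { decide := true }) at h
      have h2 := hpd.dotProduct_mulVec_pos hyne
      rw [show star (fun i => if i = e01 then 3 * q1 else if i = e21 then 4/3 else 0 : AE2 → ℝ)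
            = (fun i => if i = e01 then 3 * q1 else if i = e21 then 4/3 else 0 : AE2 → ℝ) from rfl,
          quadAE2] at h2
      norm_num (config := { decide := true }) at h2
      nlinarith [h2]
    · have hyne : (fun i => if i = e02 then -9 * q1 else if i = e20 then 4/5 else 0 : AE2 → ℝ) ≠ 0 := by
        intro hcon
        have h := congrFun hcon e20
        norm_num (config := { decide := true }) at h
      have h2 := hpd.dotProduct_mulVec_pos hyne
      rw [show star (fun i => if i = e02 then -9 * q1 else if i = e20 then 4/5 else 0 : AE2 → ℝ)
            = (fun i => if i = e02 then -9 * q1 else if i = e20 then 4/5 else 0 : AE2 → ℝ) from rfl,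
          quadAE2] at h2
      norm_num (config := { decide := true }) at h2
      nlinarith [h2]
  · rintro ⟨hD, hE⟩
    refine Matrix.PosDef.of_dotProduct_mulVec_pos ((Matrix.isHermitian_diagonal _).add (filter_herm q0 q1)) (fun x hx => ?_)
    rw [show star x = x from rfl, quadAE2]
    obtain ⟨i, hi⟩ := Function.ne_iff.mp hx
    apply pos_form q0 q1 _ _ _ _ _ _ _ _ hD hE
    obtain ⟨⟨v, w⟩, hp⟩ := i
    fin_cases v <;> fin_cases w
    · exact Or.inl hi
    · exact Or.inr (Or.inl hi)
    · exact Or.inr (Or.inr (Or.inl hi))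
    · exact Or.inr (Or.inr (Or.inr (Or.inl hi)))
    · exact Or.inr (Or.inr (Or.inr (Or.inr (Or.inl hi))))
    · exact Or.inr (Or.inr (Or.inr (Or.inr (Or.inr (Or.inl hi)))))
    · exact Or.inr (Or.inr (Or.inr (Or.inr (Or.inr (Or.inr (Or.inl hi))))))
    · exact Or.inr (Or.inr (Or.inr (Or.inr (Or.inr (Or.inr (Or.inr hi))))))
    · exact absurd rfl hp
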